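/- Let d ≥ 3, let Ω ⊆ ℝ^d be open, and let σ₁, σ₂ : Ω → ℝ be C^∞ with σ₂ = σ₁ · v for a C^∞ function v : Ω → ℝ that is everywhere strictly positive. Define S(σ) := ‖∇σ‖² − (2/d)·σ·Δσ, and suppose that for i = 1, 2 there are C^∞ functions B_i with S(σ_i)(x) = 1 + σ_i(x)^d · B_i(x) for all x ∈ Ω. Then there exists a C^∞ function C : Ω → ℝ such that B₂ = B₁ + σ₁ · C; in particular B₁(x) = B₂(x) for every x in the zero set of σ₁. -/

import Mathlib

/-- The Euclidean Laplacian of `f : ℝ^d → ℝ` at `x`: the trace of the second derivative. -/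
noncomputable def euclideanLaplacian {d : ℕ} (f : EuclideanSpace ℝ (Fin d) → ℝ)
    (x : EuclideanSpace ℝ (Fin d)) : ℝ :=
  ∑ i : Fin d, iteratedFDeriv ℝ 2 f x ![EuclideanSpace.single i 1, EuclideanSpace.single i 1]

/-- The flat-background singular Yamabe operator `S(σ) = ‖∇σ‖² - (2/d)·σ·Δσ`. -/
noncomputable def singularYamabeS {d : ℕ} (σ : EuclideanSpace ℝ (Fin d) → ℝ)
    (x : EuclideanSpace ℝ (Fin d)) : ℝ :=
  ‖gradient σ x‖ ^ 2 - (2 / (d : ℝ)) * σ x * euclideanLaplacian σ x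


open scoped BigOperators


variable {d : ℕ}

noncomputable def pd (i : Fin d) (f : (EuclideanSpace ℝ (Fin d)) → ℝ) (x : (EuclideanSpace ℝ (Fin d))) : ℝ :=
  fderiv ℝ f x (EuclideanSpace.single i 1)

variable {Ω : Set (EuclideanSpace ℝ (Fin d))}

lemma cdAt (hΩ : IsOpen Ω) {f : (EuclideanSpace ℝ (Fin d)) → ℝ} (hf : ContDiffOn ℝ (⊤ : ℕ∞) f Ω)
    {x : (EuclideanSpace ℝ (Fin d))} (hx : x ∈ Ω) : ContDiffAt ℝ (⊤ : ℕ∞) f x :=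
  (hf x hx).contDiffAt (hΩ.mem_nhds hx)

lemma dAt (hΩ : IsOpen Ω) {f : (EuclideanSpace ℝ (Fin d)) → ℝ} (hf : ContDiffOn ℝ (⊤ : ℕ∞) f Ω)
    {x : (EuclideanSpace ℝ (Fin d))} (hx : x ∈ Ω) : DifferentiableAt ℝ f x :=
  (cdAt hΩ hf hx).differentiableAt (by simp)

lemma smoothOn_pd (hΩ : IsOpen Ω) {f : (EuclideanSpace ℝ (Fin d)) → ℝ} (hf : ContDiffOn ℝ (⊤ : ℕ∞) f Ω)
    (i : Fin d) : ContDiffOn ℝ (⊤ : ℕ∞) (pd i f) Ω := by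
  intro x hx
  have h1 : ContDiffAt ℝ (⊤ : ℕ∞) (fderiv ℝ f) x := (cdAt hΩ hf hx).fderiv_right (by exact_mod_cast le_top)
  exact (h1.clm_apply contDiffAt_const).contDiffWithinAt

lemma pd_congr {f g : (EuclideanSpace ℝ (Fin d)) → ℝ} (hΩ : IsOpen Ω) (h : ∀ y ∈ Ω, f y = g y) {x : (EuclideanSpace ℝ (Fin d))}
    (hx : x ∈ Ω) (i : Fin d) : pd i f x = pd i g x := by
  have : f =ᶠ[nhds x] g := Filter.eventuallyEq_of_mem (hΩ.mem_nhds hx) h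
  rw [pd, this.fderiv_eq]; rfl

lemma pd_add {f g : (EuclideanSpace ℝ (Fin d)) → ℝ} {x : (EuclideanSpace ℝ (Fin d))} (hf : DifferentiableAt ℝ f x)
    (hg : DifferentiableAt ℝ g x) (i : Fin d) :
    pd i (fun y => f y + g y) x = pd i f x + pd i g x := by
  rw [pd, fderiv_fun_add hf hg]; rfl

lemma pd_const_add (c : ℝ) {f : (EuclideanSpace ℝ (Fin d)) → ℝ} {x : (EuclideanSpace ℝ (Fin d))} (i : Fin d) :
    pd i (fun y => c + f y) x = pd i f x := by
  rw [pd, fderiv_const_add]; rfl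

lemma pd_mul {f g : (EuclideanSpace ℝ (Fin d)) → ℝ} {x : (EuclideanSpace ℝ (Fin d))} (hf : DifferentiableAt ℝ f x)
    (hg : DifferentiableAt ℝ g x) (i : Fin d) :
    pd i (fun y => f y * g y) x = f x * pd i g x + g x * pd i f x := by
  rw [pd, fderiv_fun_mul hf hg]; simp [pd]

lemma pd_const_mul (c : ℝ) {f : (EuclideanSpace ℝ (Fin d)) → ℝ} {x : (EuclideanSpace ℝ (Fin d))} (hf : DifferentiableAt ℝ f x) (i : Fin d) :
    pd i (fun y => c * f y) x = c * pd i f x := by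
  rw [pd, fderiv_const_mul hf]; simp [pd]

lemma pd_pow_mul {τ w : (EuclideanSpace ℝ (Fin d)) → ℝ} {x : (EuclideanSpace ℝ (Fin d))} (hτ : DifferentiableAt ℝ τ x)
    (hw : DifferentiableAt ℝ w x) (j : ℕ) (i : Fin d) :
    pd i (fun y => τ y ^ j * w y) x
      = (j : ℝ) * τ x ^ (j - 1) * pd i τ x * w x + τ x ^ j * pd i w x := by
  induction j with
  | zero => simp
  | succ m ih =>
    have he : (fun y => τ y ^ (m + 1) * w y) = fun y => τ y * (τ y ^ m * w y) := by
      funext y; ring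
    rw [he, pd_mul (g := fun y => τ y ^ m * w y) hτ ((hτ.pow m).mul hw), ih]
    rcases m with _ | m'
    · simp; ring
    · simp only [Nat.add_sub_cancel]
      have hpow : τ x * τ x ^ m' = τ x ^ (m' + 1) := (pow_succ' _ _).symm
      have hpow2 : τ x * τ x ^ (m' + 1) = τ x ^ (m' + 2) := (pow_succ' _ _).symm
      push_cast
      linear_combination ((m' : ℝ) + 1) * pd i τ x * w x * hpow + pd i w x * hpow2

lemma yamabe_eq (hΩ : IsOpen Ω) {f : (EuclideanSpace ℝ (Fin d)) → ℝ} (hf : ContDiffOn ℝ (⊤ : ℕ∞) f Ω)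
    {x : (EuclideanSpace ℝ (Fin d))} (hx : x ∈ Ω) :
    singularYamabeS f x
      = (∑ i : Fin d, (pd i f x) ^ 2)
        - (2 / (d : ℝ)) * f x * ∑ i : Fin d, pd i (pd i f) x := by
  have hgrad : ‖gradient f x‖ ^ 2 = ∑ i : Fin d, (pd i f x) ^ 2 := by
    have h1 : ∀ i, gradient f x i = pd i f x := by
      intro i
      have h2 : (inner ℝ (gradient f x) (EuclideanSpace.single i (1:ℝ)) : ℝ)
          = fderiv ℝ f x (EuclideanSpace.single i 1) := by
        show (inner ℝ ((InnerProductSpace.toDual ℝ (EuclideanSpace ℝ (Fin d))).symm (fderiv ℝ f x))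
          (EuclideanSpace.single i (1:ℝ)) : ℝ) = _
        exact InnerProductSpace.toDual_symm_apply
      have h3 : (inner ℝ (gradient f x) (EuclideanSpace.single i (1:ℝ)) : ℝ) = gradient f x i := by
        rw [real_inner_comm, EuclideanSpace.inner_single_left]; simp
      rw [pd, ← h2, h3]
    rw [← real_inner_self_eq_norm_sq, PiLp.inner_apply]
    refine Finset.sum_congr rfl fun i _ => ?_
    rw [h1]; simp [sq]
  have hlap : ∀ i : Fin d,
      iteratedFDeriv ℝ 2 f x ![EuclideanSpace.single i 1, EuclideanSpace.single i 1]
        = pd i (pd i f) x := by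
    intro i
    rw [iteratedFDeriv_two_apply]
    have h1 : ContDiffAt ℝ (⊤ : ℕ∞) (fderiv ℝ f) x :=
      (cdAt hΩ hf hx).fderiv_right (by exact_mod_cast le_top)
    have h2 : DifferentiableAt ℝ (fderiv ℝ f) x :=
      h1.differentiableAt (by simp)
    have h3 := ((ContinuousLinearMap.apply ℝ ℝ
      (EuclideanSpace.single i (1:ℝ))).hasFDerivAt.comp x h2.hasFDerivAt).fderiv
    show fderiv ℝ (fderiv ℝ f) x (EuclideanSpace.single i 1) (EuclideanSpace.single i 1) = _
    rw [pd]
    show fderiv ℝ (fderiv ℝ f) x _ _ = fderiv ℝ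
        ((ContinuousLinearMap.apply ℝ ℝ (EuclideanSpace.single i (1:ℝ))) ∘ (fderiv ℝ f)) x
        (EuclideanSpace.single i 1)
    rw [h3]
    rfl
  rw [singularYamabeS, euclideanLaplacian, hgrad]
  congr 1
  rw [Finset.sum_congr rfl fun i _ => hlap i]

lemma sum_lin2 {d : ℕ} (a b : Fin d → ℝ) (α β : ℝ) :
    ∑ i : Fin d, (α * a i + β * b i) = α * (∑ i, a i) + β * (∑ i, b i) := by
  rw [Finset.sum_add_distrib, ← Finset.mul_sum, ← Finset.mul_sum]

lemma sum_lin3 {d : ℕ} (a b c : Fin d → ℝ) (α β γ : ℝ) :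
    ∑ i : Fin d, (α * a i + β * b i + γ * c i)
      = α * (∑ i, a i) + β * (∑ i, b i) + γ * (∑ i, c i) := by
  rw [Finset.sum_add_distrib, Finset.sum_add_distrib, ← Finset.mul_sum, ← Finset.mul_sum,
    ← Finset.mul_sum]

lemma sum_lin4 {d : ℕ} (a b c e : Fin d → ℝ) (α β γ δ : ℝ) :
    ∑ i : Fin d, (α * a i + β * b i + γ * c i + δ * e i)
      = α * (∑ i, a i) + β * (∑ i, b i) + γ * (∑ i, c i) + δ * (∑ i, e i) := by
  rw [Finset.sum_add_distrib, Finset.sum_add_distrib, Finset.sum_add_distrib, ← Finset.mul_sum,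
    ← Finset.mul_sum, ← Finset.mul_sum, ← Finset.mul_sum]

/-- If `τ^m * H = 0` on `Ω`, `H` continuous, and `τ` satisfies the unit density equation
(scalar form), then `H = 0` on `Ω`. -/
lemma vanish {d : ℕ} (hd : d ≠ 0) {Ω : Set (EuclideanSpace ℝ (Fin d))} (hΩ : IsOpen Ω)
    {τ B₁ : EuclideanSpace ℝ (Fin d) → ℝ}
    (h1 : ∀ x ∈ Ω, (∑ i : Fin d, (pd i τ x) ^ 2)
      - 2 / (d : ℝ) * τ x * (∑ i : Fin d, pd i (pd i τ) x) = 1 + τ x ^ d * B₁ x)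
    {H : EuclideanSpace ℝ (Fin d) → ℝ} (hH : ContinuousOn H Ω) {m : ℕ} (hm : m ≠ 0)
    (hz : ∀ x ∈ Ω, τ x ^ m * H x = 0) : ∀ x ∈ Ω, H x = 0 := by
  intro x hx
  by_contra hne
  have hcont : ContinuousAt H x := (hH x hx).continuousAt (hΩ.mem_nhds hx)
  have h5 : ∀ᶠ y in nhds x, H y ≠ 0 := hcont.eventually_ne hne
  have h6 : ∀ᶠ y in nhds x, y ∈ Ω := hΩ.mem_nhds hx
  have h7 : ∀ᶠ y in nhds x, τ y = 0 := by
    filter_upwards [h5, h6] with y hy1 hy2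
    have := hz y hy2
    have h8 : τ y ^ m = 0 := by
      rcases mul_eq_zero.mp this with h | h
      · exact h
      · exact absurd h hy1
    exact pow_eq_zero_iff hm |>.mp h8
  rw [eventually_nhds_iff] at h7
  obtain ⟨t, ht0, hto, htx⟩ := h7
  have hpdτ : ∀ y ∈ t, ∀ i, pd i τ y = 0 := by
    intro y hy i
    have he : τ =ᶠ[nhds y] (fun _ => (0 : ℝ)) :=
      Filter.eventuallyEq_of_mem (hto.mem_nhds hy) ht0
    rw [pd, he.fderiv_eq]
    simp
  have hpd2 : ∀ i, pd i (pd i τ) x = 0 := by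
    intro i
    have he : (pd i τ) =ᶠ[nhds x] (fun _ => (0 : ℝ)) :=
      Filter.eventuallyEq_of_mem (hto.mem_nhds htx) (fun y hy => hpdτ y hy i)
    rw [pd, he.fderiv_eq]
    simp
  have := h1 x hx
  rw [Finset.sum_congr rfl (fun i _ => by rw [hpdτ x htx i]),
    Finset.sum_congr rfl (fun i _ => hpd2 i), ht0 x htx] at this
  simp [zero_pow hd] at this
noncomputable def Pf {d : ℕ} (τ : EuclideanSpace ℝ (Fin d) → ℝ) (y : EuclideanSpace ℝ (Fin d)) :
    ℝ := ∑ i : Fin d, (pd i τ y) ^ 2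

noncomputable def Qf {d : ℕ} (τ : EuclideanSpace ℝ (Fin d) → ℝ) (y : EuclideanSpace ℝ (Fin d)) :
    ℝ := ∑ i : Fin d, pd i (pd i τ) y

noncomputable def Af {d : ℕ} (τ u : EuclideanSpace ℝ (Fin d) → ℝ)
    (y : EuclideanSpace ℝ (Fin d)) : ℝ := ∑ i : Fin d, pd i τ y * pd i u y

variable {d : ℕ} {Ω : Set (EuclideanSpace ℝ (Fin d))}

lemma smooth_Pf (hΩ : IsOpen Ω) {τ : EuclideanSpace ℝ (Fin d) → ℝ}
    (hτ : ContDiffOn ℝ (⊤ : ℕ∞) τ Ω) : ContDiffOn ℝ (⊤ : ℕ∞) (Pf τ) Ω :=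
  ContDiffOn.sum fun i _ => (smoothOn_pd hΩ hτ i).pow 2

lemma smooth_Qf (hΩ : IsOpen Ω) {τ : EuclideanSpace ℝ (Fin d) → ℝ}
    (hτ : ContDiffOn ℝ (⊤ : ℕ∞) τ Ω) : ContDiffOn ℝ (⊤ : ℕ∞) (Qf τ) Ω :=
  ContDiffOn.sum fun i _ => smoothOn_pd hΩ (smoothOn_pd hΩ hτ i) i

lemma smooth_Af (hΩ : IsOpen Ω) {τ u : EuclideanSpace ℝ (Fin d) → ℝ}
    (hτ : ContDiffOn ℝ (⊤ : ℕ∞) τ Ω) (hu : ContDiffOn ℝ (⊤ : ℕ∞) u Ω) :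
    ContDiffOn ℝ (⊤ : ℕ∞) (Af τ u) Ω :=
  ContDiffOn.sum fun i _ => (smoothOn_pd hΩ hτ i).mul (smoothOn_pd hΩ hu i)

/-- first derivative expansion of `v = 1 + τ^(m+1) u` -/
lemma exp_pdv (hΩ : IsOpen Ω) {τ v u : EuclideanSpace ℝ (Fin d) → ℝ}
    (hτ : ContDiffOn ℝ (⊤ : ℕ∞) τ Ω) (hu : ContDiffOn ℝ (⊤ : ℕ∞) u Ω) (m : ℕ)
    (huv : ∀ x ∈ Ω, v x = 1 + τ x ^ (m + 1) * u x) :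
    ∀ x ∈ Ω, ∀ i, pd i v x
      = ((m : ℝ) + 1) * τ x ^ m * pd i τ x * u x + τ x ^ (m + 1) * pd i u x := by
  intro x hx i
  rw [pd_congr hΩ huv hx i, pd_const_add, pd_pow_mul (dAt hΩ hτ hx) (dAt hΩ hu hx)]
  simp only [Nat.add_sub_cancel]
  push_cast
  ring

lemma exp_A (hΩ : IsOpen Ω) {τ v u : EuclideanSpace ℝ (Fin d) → ℝ}
    (hτ : ContDiffOn ℝ (⊤ : ℕ∞) τ Ω) (hu : ContDiffOn ℝ (⊤ : ℕ∞) u Ω) (m : ℕ)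
    (huv : ∀ x ∈ Ω, v x = 1 + τ x ^ (m + 1) * u x) :
    ∀ x ∈ Ω, Af τ v x
      = (((m : ℝ) + 1) * τ x ^ m * u x) * Pf τ x + (τ x ^ (m + 1)) * Af τ u x := by
  intro x hx
  have step1 : Af τ v x
      = ∑ i : Fin d, ((((m : ℝ) + 1) * τ x ^ m * u x) * ((fun i : Fin d => (pd i τ x) ^ 2) i)
          + (τ x ^ (m + 1)) * ((fun i : Fin d => pd i τ x * pd i u x) i)) := by
    rw [Af]
    refine Finset.sum_congr rfl fun i _ => ?_
    rw [exp_pdv hΩ hτ hu m huv x hx i]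
    ring
  rw [step1, sum_lin2]
  rfl

lemma exp_N (hΩ : IsOpen Ω) {τ v u : EuclideanSpace ℝ (Fin d) → ℝ}
    (hτ : ContDiffOn ℝ (⊤ : ℕ∞) τ Ω) (hu : ContDiffOn ℝ (⊤ : ℕ∞) u Ω) (m : ℕ)
    (huv : ∀ x ∈ Ω, v x = 1 + τ x ^ (m + 1) * u x) :
    ∀ x ∈ Ω, Pf v x
      = (((m : ℝ) + 1) * τ x ^ m * u x) ^ 2 * Pf τ x
        + (2 * (((m : ℝ) + 1) * τ x ^ m * u x) * τ x ^ (m + 1)) * Af τ u x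
        + (τ x ^ (m + 1)) ^ 2 * Pf u x := by
  intro x hx
  have step1 : Pf v x
      = ∑ i : Fin d, ((((m : ℝ) + 1) * τ x ^ m * u x) ^ 2 * ((fun i : Fin d => (pd i τ x) ^ 2) i)
          + (2 * (((m : ℝ) + 1) * τ x ^ m * u x) * τ x ^ (m + 1))
              * ((fun i : Fin d => pd i τ x * pd i u x) i)
          + (τ x ^ (m + 1)) ^ 2 * ((fun i : Fin d => (pd i u x) ^ 2) i)) := by
    rw [Pf]
    refine Finset.sum_congr rfl fun i _ => ?_
    rw [exp_pdv hΩ hτ hu m huv x hx i]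
    ring
  rw [step1, sum_lin3]
  rfl

lemma exp_M (hΩ : IsOpen Ω) {τ v u : EuclideanSpace ℝ (Fin d) → ℝ}
    (hτ : ContDiffOn ℝ (⊤ : ℕ∞) τ Ω) (hu : ContDiffOn ℝ (⊤ : ℕ∞) u Ω) (m : ℕ)
    (huv : ∀ x ∈ Ω, v x = 1 + τ x ^ (m + 1) * u x) :
    ∀ x ∈ Ω, Qf v x
      = (((m : ℝ) + 1) * (m : ℝ) * τ x ^ (m - 1) * u x) * Pf τ x
        + (2 * ((m : ℝ) + 1) * τ x ^ m) * Af τ u x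
        + (((m : ℝ) + 1) * τ x ^ m * u x) * Qf τ x
        + (τ x ^ (m + 1)) * Qf u x := by
  intro x hx
  have hdτ := dAt hΩ hτ hx
  have hdu := dAt hΩ hu hx
  have hpdpdv : ∀ i : Fin d, pd i (pd i v) x
      = ((m : ℝ) + 1) * ((m : ℝ) * τ x ^ (m - 1) * pd i τ x * (pd i τ x * u x)
          + τ x ^ m * (pd i τ x * pd i u x + u x * pd i (pd i τ) x))
        + (((m : ℝ) + 1) * τ x ^ m * pd i τ x * pd i u x + τ x ^ (m + 1) * pd i (pd i u) x) := by
    intro i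
    have hdpdτ := dAt hΩ (smoothOn_pd hΩ hτ i) hx
    have hdpdu := dAt hΩ (smoothOn_pd hΩ hu i) hx
    rw [pd_congr hΩ (fun y hy => exp_pdv hΩ hτ hu m huv y hy i) hx i]
    have hfg : (fun y => ((m : ℝ) + 1) * τ y ^ m * pd i τ y * u y + τ y ^ (m + 1) * pd i u y)
        = (fun y => ((m : ℝ) + 1) * (τ y ^ m * (pd i τ y * u y))
            + τ y ^ (m + 1) * pd i u y) := by
      funext y; ring
    rw [hfg, pd_add (f := fun y => ((m : ℝ) + 1) * (τ y ^ m * (pd i τ y * u y))) (g := fun y => τ y ^ (m + 1) * pd i u y) ((differentiableAt_const _).mul ((hdτ.pow m).mul ((dAt hΩ (smoothOn_pd hΩ hτ i) hx).mul hdu)))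
      ((hdτ.pow (m + 1)).mul hdpdu), pd_const_mul _ (f := fun y => τ y ^ m * (pd i τ y * u y)) ((hdτ.pow m).mul (hdpdτ.mul hdu)),
      pd_pow_mul (w := fun y => pd i τ y * u y) hdτ (hdpdτ.mul hdu), pd_mul hdpdτ hdu, pd_pow_mul hdτ hdpdu]
    simp only [Nat.add_sub_cancel]
    push_cast
    ring
  have step1 : Qf v x
      = ∑ i : Fin d, ((((m : ℝ) + 1) * (m : ℝ) * τ x ^ (m - 1) * u x)
            * ((fun i : Fin d => (pd i τ x) ^ 2) i)
          + (2 * ((m : ℝ) + 1) * τ x ^ m) * ((fun i : Fin d => pd i τ x * pd i u x) i)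
          + (((m : ℝ) + 1) * τ x ^ m * u x) * ((fun i : Fin d => pd i (pd i τ) x) i)
          + (τ x ^ (m + 1)) * ((fun i : Fin d => pd i (pd i u) x) i)) := by
    rw [Qf]
    refine Finset.sum_congr rfl fun i _ => ?_
    rw [hpdpdv i]
    ring
  rw [step1, sum_lin4]
  rfl

/-- The master identity M0. -/
lemma key_identity (hd : d ≠ 0) (hΩ : IsOpen Ω) {τ v σ₂ B₁ B₂ : EuclideanSpace ℝ (Fin d) → ℝ}
    (hτ : ContDiffOn ℝ (⊤ : ℕ∞) τ Ω) (hv : ContDiffOn ℝ (⊤ : ℕ∞) v Ω)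
    (hfac : ∀ x ∈ Ω, σ₂ x = τ x * v x)
    (h1 : ∀ x ∈ Ω, Pf τ x - 2 / (d : ℝ) * τ x * Qf τ x = 1 + τ x ^ d * B₁ x)
    (h2 : ∀ x ∈ Ω, Pf σ₂ x - 2 / (d : ℝ) * σ₂ x * Qf σ₂ x = 1 + σ₂ x ^ d * B₂ x) :
    ∀ x ∈ Ω, v x ^ 2 - 1
      + (2 * (1 - 2 / (d : ℝ)) * v x * Af τ v x + τ x * Pf v x
          - 2 / (d : ℝ) * τ x * v x * Qf v x) * τ x
      + τ x ^ d * (v x ^ 2 * B₁ x - v x ^ d * B₂ x) = 0 := by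
  intro x hx
  have hdτ := dAt hΩ hτ hx
  have hdv := dAt hΩ hv hx
  have hpdσ : ∀ y ∈ Ω, ∀ i, pd i σ₂ y = τ y * pd i v y + v y * pd i τ y := by
    intro y hy i
    rw [pd_congr hΩ hfac hy i, pd_mul (dAt hΩ hτ hy) (dAt hΩ hv hy)]
  have hpdpdσ : ∀ i : Fin d, pd i (pd i σ₂) x
      = τ x * pd i (pd i v) x + v x * pd i (pd i τ) x + 2 * (pd i τ x * pd i v x) := by
    intro i
    have hdpdτ := dAt hΩ (smoothOn_pd hΩ hτ i) hx
    have hdpdv := dAt hΩ (smoothOn_pd hΩ hv i) hx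
    rw [pd_congr hΩ (fun y hy => hpdσ y hy i) hx i,
      pd_add (f := fun y => τ y * pd i v y) (g := fun y => v y * pd i τ y) (hdτ.mul hdpdv) (hdv.mul hdpdτ), pd_mul hdτ hdpdv, pd_mul hdv hdpdτ]
    ring
  have hs1 : Pf σ₂ x
      = (v x ^ 2) * Pf τ x + (2 * τ x * v x) * Af τ v x + (τ x ^ 2) * Pf v x := by
    have step1 : Pf σ₂ x
        = ∑ i : Fin d, ((v x ^ 2) * ((fun i : Fin d => (pd i τ x) ^ 2) i)
            + (2 * τ x * v x) * ((fun i : Fin d => pd i τ x * pd i v x) i)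
            + (τ x ^ 2) * ((fun i : Fin d => (pd i v x) ^ 2) i)) := by
      rw [Pf]
      refine Finset.sum_congr rfl fun i _ => ?_
      rw [hpdσ x hx i]
      ring
    rw [step1, sum_lin3]
    rfl
  have hs2 : Qf σ₂ x
      = (τ x) * Qf v x + (v x) * Qf τ x + 2 * Af τ v x := by
    have step1 : Qf σ₂ x
        = ∑ i : Fin d, ((τ x) * ((fun i : Fin d => pd i (pd i v) x) i)
            + (v x) * ((fun i : Fin d => pd i (pd i τ) x) i)
            + 2 * ((fun i : Fin d => pd i τ x * pd i v x) i)) := by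
      rw [Qf]
      refine Finset.sum_congr rfl fun i _ => ?_
      rw [hpdpdσ i]
    rw [step1, sum_lin3]
    rfl
  have e1 := h1 x hx
  have e2 := h2 x hx
  rw [hs1, hs2, hfac x hx, mul_pow] at e2
  have hdR : (d : ℝ) ≠ 0 := Nat.cast_ne_zero.mpr hd
  linear_combination e2 - (v x ^ 2) * e1
lemma cf_ne (hd : d ≠ 0) (hΩ : IsOpen Ω) {τ v B₁ u : EuclideanSpace ℝ (Fin d) → ℝ} {m : ℕ}
    (hmd : m + 1 < d)
    (h1 : ∀ x ∈ Ω, Pf τ x - 2 / (d : ℝ) * τ x * Qf τ x = 1 + τ x ^ d * B₁ x)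
    (huv : ∀ x ∈ Ω, v x = 1 + τ x ^ (m + 1) * u x) :
    ∀ x ∈ Ω, τ x = 0 →
      2 + (2 * ((m : ℝ) + 1) - 2 / (d : ℝ) * ((m : ℝ) + 1) * (((m : ℝ) + 1) + 1))
        * (v x * Pf τ x) ≠ 0 := by
  intro x hx h0
  have e := h1 x hx
  rw [h0] at e
  simp only [zero_pow hd, mul_zero, zero_mul, mul_comm] at e
  have hP1 : Pf τ x = 1 := by linarith
  have hv1 : v x = 1 := by
    have := huv x hx
    rw [h0] at this
    simpa [zero_pow (Nat.succ_ne_zero m)] using this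
  rw [hP1, hv1]
  have hdm : (m : ℝ) + 1 < (d : ℝ) := by exact_mod_cast hmd
  have hdpos : (0 : ℝ) < (d : ℝ) := by
    have : 0 < d := Nat.pos_of_ne_zero hd
    exact_mod_cast this
  have hm0 : (0 : ℝ) ≤ (m : ℝ) := Nat.cast_nonneg m
  intro hzero
  have hED : (2 + (2 * ((m : ℝ) + 1) - 2 / (d : ℝ) * ((m : ℝ) + 1) * (((m : ℝ) + 1) + 1))
      * (1 * 1)) * (d : ℝ) = 2 * ((m : ℝ) + 2) * ((d : ℝ) - ((m : ℝ) + 1)) := by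
    field_simp
    ring
  rw [hzero, zero_mul] at hED
  nlinarith

lemma step (hd : d ≠ 0) (hΩ : IsOpen Ω) {τ v B₁ B₂ u : EuclideanSpace ℝ (Fin d) → ℝ}
    (hτ : ContDiffOn ℝ (⊤ : ℕ∞) τ Ω) (hv : ContDiffOn ℝ (⊤ : ℕ∞) v Ω)
    (hB₁ : ContDiffOn ℝ (⊤ : ℕ∞) B₁ Ω) (hB₂ : ContDiffOn ℝ (⊤ : ℕ∞) B₂ Ω)
    (hu : ContDiffOn ℝ (⊤ : ℕ∞) u Ω)
    (h1 : ∀ x ∈ Ω, Pf τ x - 2 / (d : ℝ) * τ x * Qf τ x = 1 + τ x ^ d * B₁ x)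
    (key : ∀ x ∈ Ω, v x ^ 2 - 1
      + (2 * (1 - 2 / (d : ℝ)) * v x * Af τ v x + τ x * Pf v x
          - 2 / (d : ℝ) * τ x * v x * Qf v x) * τ x
      + τ x ^ d * (v x ^ 2 * B₁ x - v x ^ d * B₂ x) = 0)
    {k : ℕ} (hk1 : 1 ≤ k) (hkd : k < d)
    (huv : ∀ x ∈ Ω, v x = 1 + τ x ^ k * u x) :
    ∃ u', ContDiffOn ℝ (⊤ : ℕ∞) u' Ω ∧ ∀ x ∈ Ω, v x = 1 + τ x ^ (k + 1) * u' x := by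
  obtain ⟨m, rfl⟩ : ∃ m, k = m + 1 := ⟨k - 1, by omega⟩
  set cf : EuclideanSpace ℝ (Fin d) → ℝ := fun y =>
    2 + (2 * ((m : ℝ) + 1) - 2 / (d : ℝ) * ((m : ℝ) + 1) * (((m : ℝ) + 1) + 1))
      * (v y * Pf τ y) with hcf
  set Ff : EuclideanSpace ℝ (Fin d) → ℝ := fun y =>
    τ y ^ m * u y ^ 2 + 2 * (1 - 2 / (d : ℝ)) * v y * Af τ u y
      + ((m : ℝ) + 1) ^ 2 * τ y ^ m * u y ^ 2 * Pf τ y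
      + 2 * ((m : ℝ) + 1) * τ y ^ (m + 1) * u y * Af τ u y + τ y ^ (m + 2) * Pf u y
      - 4 * ((m : ℝ) + 1) / (d : ℝ) * v y * Af τ u y
      - 2 * ((m : ℝ) + 1) / (d : ℝ) * v y * u y * Qf τ y
      - 2 / (d : ℝ) * τ y * v y * Qf u y
      + τ y ^ (d - (m + 1) - 1) * (v y ^ 2 * B₁ y - v y ^ d * B₂ y) with hFf
  have hPS := smooth_Pf hΩ hτ
  have hQS := smooth_Qf hΩ hτ
  have hAS := smooth_Af hΩ hτ hu
  have hNS := smooth_Pf hΩ hu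
  have hMS := smooth_Qf hΩ hu
  have hcS : ContDiffOn ℝ (⊤ : ℕ∞) cf Ω :=
    contDiffOn_const.add (contDiffOn_const.mul (hv.mul hPS))
  have hFS : ContDiffOn ℝ (⊤ : ℕ∞) Ff Ω := by
    refine ContDiffOn.add (ContDiffOn.sub (ContDiffOn.sub (ContDiffOn.sub
      (ContDiffOn.add (ContDiffOn.add (ContDiffOn.add (ContDiffOn.add ?_ ?_) ?_) ?_) ?_)
      ?_) ?_) ?_) ?_
    · exact (hτ.pow m).mul (hu.pow 2)
    · exact (contDiffOn_const.mul hv).mul hAS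
    · exact ((contDiffOn_const.mul (hτ.pow m)).mul (hu.pow 2)).mul hPS
    · exact (((contDiffOn_const.mul (hτ.pow (m + 1)))).mul hu).mul hAS
    · exact (hτ.pow (m + 2)).mul hNS
    · exact (contDiffOn_const.mul hv).mul hAS
    · exact ((contDiffOn_const.mul hv).mul hu).mul hQS
    · exact ((contDiffOn_const.mul hτ).mul hv).mul hMS
    · exact (hτ.pow (d - (m + 1) - 1)).mul (((hv.pow 2).mul hB₁).sub ((hv.pow d).mul hB₂))
  have hdR : (d : ℝ) ≠ 0 := Nat.cast_ne_zero.mpr hd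
  have hZ : ∀ x ∈ Ω, τ x ^ (m + 1) * (u x * cf x + τ x * Ff x) = 0 := by
    intro x hx
    have hKey := key x hx
    have hA := exp_A hΩ hτ hu m huv x hx
    have hN := exp_N hΩ hτ hu m huv x hx
    have hM := exp_M hΩ hτ hu m huv x hx
    rw [hA, hN, hM] at hKey
    have hv0 := huv x hx
    have hd' : τ x ^ d = τ x ^ (m + 1 + 1) * τ x ^ (d - (m + 1) - 1) := by
      rw [← pow_add]; congr 1; omega
    rw [hd'] at hKey
    have hr : (m : ℝ) * (τ x ^ 2 * τ x ^ (m - 1)) = (m : ℝ) * τ x ^ (m + 1) := by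
      rcases m with _ | m'
      · norm_num
      · rw [show m' + 1 - 1 = m' from rfl, ← pow_add]
        have he : 2 + m' = m' + 1 + 1 := by omega
        rw [he]
    rw [hcf, hFf]
    linear_combination hKey + (-(v x + 1 + τ x ^ (m + 1) * u x)) * hv0
      + (2 / (d : ℝ) * v x * ((m : ℝ) + 1) * u x * Pf τ x) * hr
  have hZc : ∀ x ∈ Ω, u x * cf x + τ x * Ff x = 0 := by
    refine vanish hd hΩ h1 ?_ (Nat.succ_ne_zero m) hZ
    exact ((hu.mul hcS).add (hτ.mul hFS)).continuousOn
  have hcne := cf_ne hd hΩ hkd h1 huv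
  set u' : EuclideanSpace ℝ (Fin d) → ℝ :=
    fun y => if τ y = 0 then -Ff y / cf y else u y / τ y with hu'
  have hus : ContDiffOn ℝ (⊤ : ℕ∞) u' Ω := by
    apply contDiffOn_of_locally_contDiffOn
    intro x hx
    by_cases h0 : τ x = 0
    · refine ⟨Ω ∩ cf ⁻¹' ({0}ᶜ), hcS.continuousOn.isOpen_inter_preimage hΩ
        isOpen_compl_singleton, ⟨hx, by simpa using hcne x hx h0⟩, ?_⟩
      have hsub : Ω ∩ (Ω ∩ cf ⁻¹' ({0}ᶜ)) ⊆ Ω := Set.inter_subset_left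
      refine ContDiffOn.congr (((hFS.mono hsub).neg.div (hcS.mono hsub)
        (fun y hy => by simpa using hy.2.2)) : ContDiffOn ℝ (⊤ : ℕ∞)
          (fun y => -Ff y / cf y) _) ?_
      intro y hy
      have hcy : cf y ≠ 0 := by simpa using hy.2.2
      show (if τ y = 0 then -Ff y / cf y else u y / τ y) = -Ff y / cf y
      by_cases ht : τ y = 0
      · rw [if_pos ht]
      · rw [if_neg ht, div_eq_div_iff ht hcy]
        linear_combination hZc y hy.1
    · refine ⟨Ω ∩ τ ⁻¹' ({0}ᶜ), hτ.continuousOn.isOpen_inter_preimage hΩ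
        isOpen_compl_singleton, ⟨hx, by simpa using h0⟩, ?_⟩
      have hsub : Ω ∩ (Ω ∩ τ ⁻¹' ({0}ᶜ)) ⊆ Ω := Set.inter_subset_left
      refine ContDiffOn.congr (((hu.mono hsub).div (hτ.mono hsub)
        (fun y hy => by simpa using hy.2.2)) : ContDiffOn ℝ (⊤ : ℕ∞)
          (fun y => u y / τ y) _) ?_
      intro y hy
      have hty : τ y ≠ 0 := by simpa using hy.2.2
      show (if τ y = 0 then -Ff y / cf y else u y / τ y) = u y / τ y
      rw [if_neg hty]
  refine ⟨u', hus, ?_⟩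
  intro x hx
  by_cases h0 : τ x = 0
  · rw [huv x hx, h0]
    simp [zero_pow (Nat.succ_ne_zero m), zero_pow (Nat.succ_ne_zero (m + 1))]
  · rw [huv x hx]
    have hux : u' x = u x / τ x := by
      show (if τ x = 0 then -Ff x / cf x else u x / τ x) = u x / τ x
      rw [if_neg h0]
    rw [hux]
    field_simp
    ring
lemma final_step (hd : d ≠ 0) (hΩ : IsOpen Ω) {τ v B₁ B₂ u : EuclideanSpace ℝ (Fin d) → ℝ}
    (hτ : ContDiffOn ℝ (⊤ : ℕ∞) τ Ω) (hv : ContDiffOn ℝ (⊤ : ℕ∞) v Ω)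
    (hB₁ : ContDiffOn ℝ (⊤ : ℕ∞) B₁ Ω) (hB₂ : ContDiffOn ℝ (⊤ : ℕ∞) B₂ Ω)
    (hu : ContDiffOn ℝ (⊤ : ℕ∞) u Ω)
    (h1 : ∀ x ∈ Ω, Pf τ x - 2 / (d : ℝ) * τ x * Qf τ x = 1 + τ x ^ d * B₁ x)
    (key : ∀ x ∈ Ω, v x ^ 2 - 1
      + (2 * (1 - 2 / (d : ℝ)) * v x * Af τ v x + τ x * Pf v x
          - 2 / (d : ℝ) * τ x * v x * Qf v x) * τ x
      + τ x ^ d * (v x ^ 2 * B₁ x - v x ^ d * B₂ x) = 0)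
    (huv : ∀ x ∈ Ω, v x = 1 + τ x ^ d * u x) :
    ∃ C : EuclideanSpace ℝ (Fin d) → ℝ, ContDiffOn ℝ (⊤ : ℕ∞) C Ω ∧
      ∀ x ∈ Ω, B₂ x = B₁ x + τ x * C x := by
  obtain ⟨m, rfl⟩ : ∃ m, d = m + 1 := ⟨d - 1, by omega⟩
  have hdR : ((m + 1 : ℕ) : ℝ) ≠ 0 := Nat.cast_ne_zero.mpr hd
  set Fd : EuclideanSpace ℝ (Fin (m + 1)) → ℝ := fun y =>
    τ y ^ m * u y ^ 2 + 2 * (1 - 2 / ((m + 1 : ℕ) : ℝ)) * v y * Af τ u y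
      + ((m : ℝ) + 1) ^ 2 * τ y ^ m * u y ^ 2 * Pf τ y
      + 2 * ((m : ℝ) + 1) * τ y ^ (m + 1) * u y * Af τ u y + τ y ^ (m + 2) * Pf u y
      - 4 * ((m : ℝ) + 1) / ((m + 1 : ℕ) : ℝ) * v y * Af τ u y
      - 2 * ((m : ℝ) + 1) / ((m + 1 : ℕ) : ℝ) * v y * u y * Qf τ y
      - 2 / ((m + 1 : ℕ) : ℝ) * τ y * v y * Qf u y with hFd
  set cd : EuclideanSpace ℝ (Fin (m + 1)) → ℝ := fun y => 2 - 2 * (v y * Pf τ y) with hcd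
  have hPS := smooth_Pf hΩ hτ
  have hQS := smooth_Qf hΩ hτ
  have hAS := smooth_Af hΩ hτ hu
  have hNS := smooth_Pf hΩ hu
  have hMS := smooth_Qf hΩ hu
  have hFS : ContDiffOn ℝ (⊤ : ℕ∞) Fd Ω := by
    refine ContDiffOn.sub (ContDiffOn.sub (ContDiffOn.sub
      (ContDiffOn.add (ContDiffOn.add (ContDiffOn.add (ContDiffOn.add ?_ ?_) ?_) ?_) ?_)
      ?_) ?_) ?_
    · exact (hτ.pow m).mul (hu.pow 2)
    · exact (contDiffOn_const.mul hv).mul hAS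
    · exact ((contDiffOn_const.mul (hτ.pow m)).mul (hu.pow 2)).mul hPS
    · exact (((contDiffOn_const.mul (hτ.pow (m + 1)))).mul hu).mul hAS
    · exact (hτ.pow (m + 2)).mul hNS
    · exact (contDiffOn_const.mul hv).mul hAS
    · exact ((contDiffOn_const.mul hv).mul hu).mul hQS
    · exact ((contDiffOn_const.mul hτ).mul hv).mul hMS
  have hZ : ∀ x ∈ Ω, τ x ^ (m + 1) * (u x * cd x
      + (v x ^ 2 * B₁ x - v x ^ (m + 1) * B₂ x) + τ x * Fd x) = 0 := by
    intro x hx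
    have hKey := key x hx
    have hA := exp_A hΩ hτ hu m huv x hx
    have hN := exp_N hΩ hτ hu m huv x hx
    have hM := exp_M hΩ hτ hu m huv x hx
    rw [hA, hN, hM] at hKey
    have hv0 := huv x hx
    have hr : (m : ℝ) * (τ x ^ 2 * τ x ^ (m - 1)) = (m : ℝ) * τ x ^ (m + 1) := by
      rcases m with _ | m'
      · norm_num
      · rw [show m' + 1 - 1 = m' from rfl, ← pow_add]
        have he : 2 + m' = m' + 1 + 1 := by omega
        rw [he]
    rw [hcd, hFd]
    have hdR' : ((m : ℝ) + 1) ≠ 0 := by positivity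
    push_cast at hKey hA hN hM hv0 hr ⊢
    linear_combination (norm := (field_simp; ring1)) hKey
      + (-(v x + 1 + τ x ^ (m + 1) * u x)) * hv0
      + (2 / ((m : ℝ) + 1) * v x * ((m : ℝ) + 1) * u x * Pf τ x) * hr
  have hZc : ∀ x ∈ Ω, u x * cd x + (v x ^ 2 * B₁ x - v x ^ (m + 1) * B₂ x) + τ x * Fd x = 0 := by
    refine vanish hd hΩ h1 ?_ (Nat.succ_ne_zero m) hZ
    exact (((hu.mul ((contDiffOn_const : ContDiffOn ℝ (⊤:ℕ∞) (fun _ => (2:ℝ)) Ω).sub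
      (contDiffOn_const.mul (hv.mul hPS)))).add
      (((hv.pow 2).mul hB₁).sub ((hv.pow (m + 1)).mul hB₂))).add (hτ.mul hFS)).continuousOn
  refine ⟨fun y => -2 * u y * (2 / ((m + 1 : ℕ) : ℝ) * Qf τ y + τ y ^ m * B₁ y
      + τ y ^ m * u y * Pf τ y) + Fd y + τ y ^ m * u y * (v y + 1) * B₁ y
      - τ y ^ m * u y * (∑ j ∈ Finset.range (m + 1), v y ^ j) * B₂ y, ?_, ?_⟩
  · refine ContDiffOn.sub (ContDiffOn.add (ContDiffOn.add ?_ hFS) ?_) ?_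
    · exact (contDiffOn_const.mul hu).mul (((contDiffOn_const.mul hQS).add
        ((hτ.pow m).mul hB₁)).add (((hτ.pow m).mul hu).mul hPS))
    · exact ((((hτ.pow m).mul hu).mul (hv.add contDiffOn_const)).mul hB₁)
    · exact ((((hτ.pow m).mul hu).mul
        (ContDiffOn.sum fun j _ => hv.pow j)).mul hB₂)
  · intro x hx
    have hZx := hZc x hx
    have h1x := h1 x hx
    have hv0 := huv x hx
    have hgeom := geom_sum_mul (v x) (m + 1)
    have hv2 : v x ^ 2 - 1 = τ x ^ (m + 1) * u x * (v x + 1) := by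
      linear_combination (v x + 1) * hv0
    have hvd : v x ^ (m + 1) - 1
        = τ x ^ (m + 1) * u x * (∑ j ∈ Finset.range (m + 1), v x ^ j) := by
      linear_combination (-1 : ℝ) * hgeom + (∑ j ∈ Finset.range (m + 1), v x ^ j) * hv0
    have hvP : v x * Pf τ x = 1 + τ x * (2 / ((m + 1 : ℕ) : ℝ) * Qf τ x
        + τ x ^ m * B₁ x + τ x ^ m * u x * Pf τ x) := by
      linear_combination h1x + Pf τ x * hv0
    simp only [hcd] at hZx
    linear_combination (norm := (push_cast; ring1)) (-1 : ℝ) * hZx + B₁ x * hv2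
      - B₂ x * hvd + (-2 * u x) * hvP

/-- Flat-background instance of Theorem 4.7: if `σ₁` and `σ₂ = σ₁·v` (`v` smooth, positive)
are both conformal unit defining densities with `S(σᵢ) = 1 + σᵢ^d·Bᵢ` on `Ω`, then
`B₂ = B₁ + σ₁·C` for a smooth `C`; in particular `B₁ = B₂` on the zero set of `σ₁`, so the
obstruction density `ℬ = B|_Σ` is independent of the choice of defining density. -/
theorem obstruction_density_well_defined
    (d : ℕ) (hd : 3 ≤ d) (Ω : Set (EuclideanSpace ℝ (Fin d))) (hΩ : IsOpen Ω)
    (σ₁ σ₂ v : EuclideanSpace ℝ (Fin d) → ℝ)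
    (hσ₁ : ContDiffOn ℝ (⊤ : ℕ∞) σ₁ Ω) (hσ₂ : ContDiffOn ℝ (⊤ : ℕ∞) σ₂ Ω)
    (hv : ContDiffOn ℝ (⊤ : ℕ∞) v Ω) (hvpos : ∀ x ∈ Ω, 0 < v x)
    (hfac : ∀ x ∈ Ω, σ₂ x = σ₁ x * v x)
    (B₁ B₂ : EuclideanSpace ℝ (Fin d) → ℝ)
    (hB₁ : ContDiffOn ℝ (⊤ : ℕ∞) B₁ Ω) (hB₂ : ContDiffOn ℝ (⊤ : ℕ∞) B₂ Ω)
    (h₁ : ∀ x ∈ Ω, singularYamabeS σ₁ x = 1 + σ₁ x ^ d * B₁ x)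
    (h₂ : ∀ x ∈ Ω, singularYamabeS σ₂ x = 1 + σ₂ x ^ d * B₂ x) :
    (∃ C : EuclideanSpace ℝ (Fin d) → ℝ, ContDiffOn ℝ (⊤ : ℕ∞) C Ω ∧
      ∀ x ∈ Ω, B₂ x = B₁ x + σ₁ x * C x) ∧
    ∀ x ∈ Ω, σ₁ x = 0 → B₁ x = B₂ x := by
  have hd0 : d ≠ 0 := by omega
  have h1' : ∀ x ∈ Ω, Pf σ₁ x - 2 / (d : ℝ) * σ₁ x * Qf σ₁ x = 1 + σ₁ x ^ d * B₁ x := by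
    intro x hx
    have h := h₁ x hx
    rw [yamabe_eq hΩ hσ₁ hx] at h
    rw [Pf, Qf]
    linarith
  have h2' : ∀ x ∈ Ω, Pf σ₂ x - 2 / (d : ℝ) * σ₂ x * Qf σ₂ x = 1 + σ₂ x ^ d * B₂ x := by
    intro x hx
    have h := h₂ x hx
    rw [yamabe_eq hΩ hσ₂ hx] at h
    rw [Pf, Qf]
    linarith
  have key := key_identity hd0 hΩ hσ₁ hv hfac h1' h2'
  have hvne : ∀ y ∈ Ω, v y + 1 ≠ 0 := fun y hy =>
    ne_of_gt (by have := hvpos y hy; linarith)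
  -- base case : v = 1 + σ₁ * u₁
  set W : EuclideanSpace ℝ (Fin d) → ℝ := fun y =>
    -(2 * (1 - 2 / (d : ℝ)) * v y * Af σ₁ v y + σ₁ y * Pf v y
        - 2 / (d : ℝ) * σ₁ y * v y * Qf v y)
      - σ₁ y ^ (d - 1) * (v y ^ 2 * B₁ y - v y ^ d * B₂ y) with hW
  have hWs : ContDiffOn ℝ (⊤ : ℕ∞) W Ω := by
    refine ContDiffOn.sub (ContDiffOn.neg (ContDiffOn.sub (ContDiffOn.add ?_ ?_) ?_)) ?_
    · exact (contDiffOn_const.mul hv).mul (smooth_Af hΩ hσ₁ hv)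
    · exact hσ₁.mul (smooth_Pf hΩ hv)
    · exact ((contDiffOn_const.mul hσ₁).mul hv).mul (smooth_Qf hΩ hv)
    · exact (hσ₁.pow (d - 1)).mul (((hv.pow 2).mul hB₁).sub ((hv.pow d).mul hB₂))
  have hbase : ∀ x ∈ Ω, v x = 1 + σ₁ x ^ 1 * (W x / (v x + 1)) := by
    intro x hx
    have hk := key x hx
    have hpow : σ₁ x ^ d = σ₁ x * σ₁ x ^ (d - 1) := by
      rw [← pow_succ']; congr 1; omega
    have hne := hvne x hx
    have hq : (v x - 1) * (v x + 1) = σ₁ x * W x := by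
      simp only [hW]
      linear_combination hk - (v x ^ 2 * B₁ x - v x ^ d * B₂ x) * hpow
    rw [pow_one]
    have h2 : v x - 1 = σ₁ x * (W x / (v x + 1)) := by
      rw [mul_div_assoc', eq_div_iff hne]
      linear_combination hq
    linarith
  have base : ∃ u, ContDiffOn ℝ (⊤ : ℕ∞) u Ω ∧ ∀ x ∈ Ω, v x = 1 + σ₁ x ^ 1 * u x :=
    ⟨fun y => W y / (v y + 1), hWs.div (hv.add contDiffOn_const) hvne, hbase⟩
  have main : ∀ k : ℕ, 1 ≤ k → k ≤ d →
      ∃ u, ContDiffOn ℝ (⊤ : ℕ∞) u Ω ∧ ∀ x ∈ Ω, v x = 1 + σ₁ x ^ k * u x := by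
    intro k
    induction k with
    | zero => omega
    | succ n ih =>
      intro _ hnd
      rcases Nat.eq_zero_or_pos n with h0 | hpos
      · subst h0; exact base
      · obtain ⟨u, huS, huv⟩ := ih hpos (by omega)
        exact step hd0 hΩ hσ₁ hv hB₁ hB₂ huS h1' key hpos (by omega) huv
  obtain ⟨u, huS, huv⟩ := main d (by omega) le_rfl
  obtain ⟨C, hCS, hC⟩ := final_step hd0 hΩ hσ₁ hv hB₁ hB₂ huS h1' key huv
  refine ⟨⟨C, hCS, hC⟩, ?_⟩
  intro x hx h0
  have h := hC x hx
  rw [h0] at h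
  linarith
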